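/- If f : G → E satisfies the Drygas inequality and additionally f is odd (f(-x) = -f(x)), then f is additive: f(x+y) = f(x)+f(y) for all x, y ∈ G. -/

import Mathlib

theorem stmt18 {G E : Type*} [AddCommGroup G] [NormedAddCommGroup E]
    [InnerProductSpace ℝ E] (f : G → E) (hodd : ∀ x : G, f (-x) = -f x)
    (h : ∀ x y : G, ‖2 • f x + f y + f (-y) - f (x - y)‖ ≤ ‖f (x + y)‖) :
    ∀ x y : G, f (x + y) = f x + f y := by
  -- simplified hypothesis
  have hs : ∀ x y : G, ‖2 • f x - f (x - y)‖ ≤ ‖f (x + y)‖ := by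
    intro x y
    have := h x y
    rwa [hodd y, add_neg_cancel_right] at this
  have h0 : f 0 = 0 := by
    have := hodd 0
    rw [neg_zero] at this
    have h2 : (2:ℝ) • f 0 = 0 := by
      rw [two_smul]; exact add_eq_zero_iff_eq_neg.mpr this
    simpa using (smul_eq_zero.mp h2).resolve_left (by norm_num)
  -- f (x + x) = 2 • f x
  have hdbl : ∀ x : G, f (x + x) = 2 • f x := by
    intro x
    have := hs x (-x)
    rw [sub_neg_eq_add, show x + -x = (0:G) by abel, h0, norm_zero] at this
    have h2 : ‖2 • f x - f (x + x)‖ = 0 := le_antisymm this (norm_nonneg _)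
    exact (sub_eq_zero.mp (norm_eq_zero.mp h2)).symm
  -- key: ‖f(x+y) - f y‖ ≤ ‖f x‖ and ‖f(x+y) - f x‖ ≤ ‖f y‖
  have key : ∀ x y : G, ‖f (x + y) - f y‖ ≤ ‖f x‖ := by
    intro x y
    have := hs (x + y) (x - y)
    have e1 : x + y - (x - y) = y + y := by abel
    have e2 : x + y + (x - y) = x + x := by abel
    rw [e1, e2, hdbl, hdbl, ← smul_sub] at this
    have hn : ∀ z : E, ‖(2:ℕ) • z‖ = 2 * ‖z‖ := by
      intro z
      rw [show (2:ℕ) • z = (2:ℝ) • z by rw [two_smul ℕ z, two_smul ℝ z], norm_smul]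
      norm_num
    rw [hn, hn] at this
    linarith
  intro x y
  set u := f x with hu
  set v := f y with hv
  set A := f (x + y) with hA
  set B := f (x - y) with hB
  have k1 : ‖A - v‖ ≤ ‖u‖ := key x y
  have k2 : ‖A - u‖ ≤ ‖v‖ := by
    have := key y x
    rwa [add_comm y x] at this
  have k3 : ‖B + v‖ ≤ ‖u‖ := by
    have := key x (-y)
    rw [hodd, ← sub_eq_add_neg, sub_neg_eq_add] at this
    exact this
  have k4 : ‖B - u‖ ≤ ‖v‖ := by
    have := key (-y) x
    rw [show (-y) + x = x - y by abel, hodd, norm_neg] at this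
    exact this
  have h1 : ‖2 • u - B‖ ≤ ‖A‖ := hs x y
  have h2 : ‖2 • u - A‖ ≤ ‖B‖ := by
    have := hs x (-y)
    rwa [sub_neg_eq_add, ← sub_eq_add_neg] at this
  have h3 : ‖2 • v + B‖ ≤ ‖A‖ := by
    have := hs y x
    rw [show y - x = -(x - y) by abel, hodd, sub_neg_eq_add, add_comm y x] at this
    exact this
  have h4 : ‖2 • v - A‖ ≤ ‖B‖ := by
    have := hs y (-x)
    rw [sub_neg_eq_add, add_comm y x, show y + -x = -(x - y) by abel, hodd,
      norm_neg] at this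
    exact this
  -- pass to inner products
  have sqle : ∀ a b : E, ‖a‖ ≤ ‖b‖ → (inner ℝ a a : ℝ) ≤ inner ℝ b b := by
    intro a b hab
    rw [real_inner_self_eq_norm_sq, real_inner_self_eq_norm_sq]
    exact pow_le_pow_left₀ (norm_nonneg _) hab 2
  have K1 := sqle _ _ k1
  have K2 := sqle _ _ k2
  have K3 := sqle _ _ k3
  have K4 := sqle _ _ k4
  have H1 := sqle _ _ h1
  have H2 := sqle _ _ h2
  have H3 := sqle _ _ h3
  have H4 := sqle _ _ h4
  have goal2 : (inner ℝ (A - (u + v)) (A - (u + v)) : ℝ) ≤ 0 := by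
    simp only [two_smul] at K1 K2 K3 K4 H1 H2 H3 H4 ⊢
    simp only [inner_sub_left, inner_sub_right, inner_add_left, inner_add_right,
      real_inner_comm A u, real_inner_comm A v, real_inner_comm B u,
      real_inner_comm B v, real_inner_comm v u] at K1 K2 K3 K4 H1 H2 H3 H4 ⊢
    linarith [real_inner_self_nonneg (x := B - (u - v)), real_inner_comm v u,
      (by simp only [inner_sub_left, inner_sub_right, real_inner_comm B u,
        real_inner_comm B v, real_inner_comm v u] ; ring :
        (inner ℝ (B - (u - v)) (B - (u - v)) : ℝ) =
          inner ℝ B B - 2 * inner ℝ B u + 2 * inner ℝ B v + inner ℝ u u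
            - 2 * (inner ℝ u v : ℝ) + inner ℝ v v)]
  have hz : A - (u + v) = 0 := by
    have hle : (inner ℝ (A - (u + v)) (A - (u + v)) : ℝ) = 0 :=
      le_antisymm goal2 real_inner_self_nonneg
    exact inner_self_eq_zero.mp hle
  exact sub_eq_zero.mp hz
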